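/- Let N ≥ 1, let c > 1, let Λ ⊆ ℝ^N be a lattice of full rank N with covolume ‖Λ‖ = 1, and let M be a set of linear endomorphisms of ℝ^N. Suppose there exists a nonzero (M,Λ)-eligible subspace W₁ ⊆ ℝ^N with ‖Λ ∩ W₁‖ < c^{-N}. Then there exists a proper nonzero (M,Λ)-eligible subspace W_∞ ⊊ ℝ^N such that for every (M,Λ)-eligible subspace W not contained in W_∞, the discrete subgroup (Λ ∩ W) + (Λ ∩ W_∞) of ℝ^N satisfies ‖(Λ ∩ W) + (Λ ∩ W_∞)‖ ≥ c·‖Λ ∩ W_∞‖. -/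

import Mathlib

/-- The covolume of a discrete subgroup `Δ` of `ℝ^N` in its real span (by convention
`covol {0} = 1`). -/
noncomputable def covol {N : ℕ} (Δ : AddSubgroup (EuclideanSpace ℝ (Fin N))) : ℝ :=
  sInf { x : ℝ | ∃ (r : ℕ) (v : Fin r → EuclideanSpace ℝ (Fin N)),
    LinearIndependent ℝ v ∧
    (Submodule.span ℤ (Set.range v)).toAddSubgroup = Δ ∧
    x = Real.sqrt (Matrix.det (Matrix.of fun i j : Fin r => (inner ℝ (v i) (v j) : ℝ))) }

/-- `W` is `Λ`-rational: `W` is spanned over `ℝ` by `W ∩ Λ`. -/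
def IsRational {N : ℕ} (Λ : AddSubgroup (EuclideanSpace ℝ (Fin N)))
    (W : Submodule ℝ (EuclideanSpace ℝ (Fin N))) : Prop :=
  W = Submodule.span ℝ ((W : Set (EuclideanSpace ℝ (Fin N))) ∩ (Λ : Set (EuclideanSpace ℝ (Fin N))))

/-- `W` is `(M,Λ)`-eligible: `W` is `Λ`-rational and invariant under every element of `M`. -/
def IsEligible {N : ℕ} (M : Set (EuclideanSpace ℝ (Fin N) →ₗ[ℝ] EuclideanSpace ℝ (Fin N)))
    (Λ : AddSubgroup (EuclideanSpace ℝ (Fin N)))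
    (W : Submodule ℝ (EuclideanSpace ℝ (Fin N))) : Prop :=
  IsRational Λ W ∧ ∀ m ∈ M, W.map m ≤ W

set_option maxHeartbeats 1000000

open Submodule Set Matrix

namespace Stmt4Aux

noncomputable def gram {N r : ℕ} (v : Fin r → EuclideanSpace ℝ (Fin N)) :
    Matrix (Fin r) (Fin r) ℝ :=
  Matrix.of fun i j : Fin r => (inner ℝ (v i) (v j) : ℝ)

lemma sum_smul_sum {R : Type*} [CommRing R] {E' : Type*} [AddCommGroup E'] [Module R E']
    {m n : ℕ} (g : Fin m → R) (A : Matrix (Fin m) (Fin n) R) (b : Fin n → E') :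
    ∑ j, g j • (∑ i, A j i • b i) = ∑ i, (∑ j, g j * A j i) • b i := by
  simp only [Finset.smul_sum, smul_smul, Finset.sum_smul]
  exact Finset.sum_comm

lemma exists_coeff {N r s : ℕ} {v : Fin r → EuclideanSpace ℝ (Fin N)}
    {w : Fin s → EuclideanSpace ℝ (Fin N)}
    (hw : ∀ j, w j ∈ span ℤ (Set.range v)) :
    ∃ B : Matrix (Fin s) (Fin r) ℤ, ∀ j, w j = ∑ i, (B j i : ℝ) • v i := by
  choose B hB using fun j => (mem_span_range_iff_exists_fun ℤ).mp (hw j)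
  refine ⟨fun j i => B j i, fun j => ?_⟩
  rw [← hB j]
  exact (Finset.sum_congr rfl fun i _ => (Int.cast_smul_eq_zsmul ℝ _ _)).symm

lemma gram_transform {N r s : ℕ} (v : Fin r → EuclideanSpace ℝ (Fin N))
    (w : Fin s → EuclideanSpace ℝ (Fin N))
    (B : Matrix (Fin s) (Fin r) ℤ) (hw : ∀ j, w j = ∑ i, (B j i : ℝ) • v i) :
    gram w = B.map (Int.cast : ℤ → ℝ) * gram v * (B.map (Int.cast : ℤ → ℝ))ᵀ := by
  ext j k
  simp only [gram, Matrix.mul_apply, Matrix.of_apply, Matrix.transpose_apply, Matrix.map_apply,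
    hw, sum_inner, inner_sum, real_inner_smul_left, real_inner_smul_right, Finset.mul_sum,
    Finset.sum_mul]
  apply Finset.sum_congr rfl
  intro i _
  apply Finset.sum_congr rfl
  intro i' _
  rw [real_inner_comm]
  ring

lemma coeff_eq_one {N r : ℕ} {w : Fin r → EuclideanSpace ℝ (Fin N)}
    (hw : LinearIndependent ℝ w) (a : Matrix (Fin r) (Fin r) ℝ)
    (h : ∀ j, w j = ∑ k, a j k • w k) : a = 1 := by
  ext j k
  have h0 : ∑ i, (a j i - (1 : Matrix (Fin r) (Fin r) ℝ) j i) • w i = 0 := by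
    simp only [sub_smul, Finset.sum_sub_distrib, Matrix.one_apply, ite_smul, one_smul, zero_smul,
      Finset.sum_ite_eq, Finset.mem_univ, if_true, ← h j, sub_self]
  have := Fintype.linearIndependent_iff.mp hw _ h0 k
  linarith [this]

lemma span_span_coe {N r : ℕ} (v : Fin r → EuclideanSpace ℝ (Fin N)) :
    span ℝ (((span ℤ (Set.range v)).toAddSubgroup : AddSubgroup (EuclideanSpace ℝ (Fin N))) :
      Set (EuclideanSpace ℝ (Fin N))) = span ℝ (Set.range v) := by
  apply le_antisymm
  · rw [Submodule.span_le]
    intro x hx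
    have h1 : span ℤ (Set.range v) ≤ (span ℝ (Set.range v)).restrictScalars ℤ :=
      Submodule.span_le.mpr Submodule.subset_span
    exact h1 hx
  · apply Submodule.span_mono
    intro x hx
    exact Submodule.subset_span hx

lemma spanR_eq_of_spanZ_eq {N r s : ℕ} {v : Fin r → EuclideanSpace ℝ (Fin N)}
    {w : Fin s → EuclideanSpace ℝ (Fin N)}
    (h : span ℤ (Set.range w) = span ℤ (Set.range v)) :
    span ℝ (Set.range w) = span ℝ (Set.range v) := by
  rw [← span_span_coe v, ← span_span_coe w, h]

lemma det_map_int {n : ℕ} (B : Matrix (Fin n) (Fin n) ℤ) :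
    (B.map (Int.cast : ℤ → ℝ)).det = (B.det : ℝ) :=
  (RingHom.map_det (Int.castRingHom ℝ) B).symm

lemma covol_eq {N r : ℕ} {v : Fin r → EuclideanSpace ℝ (Fin N)}
    (hv : LinearIndependent ℝ v) {Δ : AddSubgroup (EuclideanSpace ℝ (Fin N))}
    (hΔ : (span ℤ (Set.range v)).toAddSubgroup = Δ) :
    covol Δ = Real.sqrt (gram v).det := by
  have hset : { x : ℝ | ∃ (s : ℕ) (w : Fin s → EuclideanSpace ℝ (Fin N)),
      LinearIndependent ℝ w ∧
      (Submodule.span ℤ (Set.range w)).toAddSubgroup = Δ ∧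
      x = Real.sqrt (Matrix.det (Matrix.of fun i j : Fin s => (inner ℝ (w i) (w j) : ℝ))) }
      = {Real.sqrt (gram v).det} := by
    apply Set.eq_singleton_iff_unique_mem.mpr
    constructor
    · exact ⟨r, v, hv, hΔ, rfl⟩
    · rintro x ⟨s, w, hw, hΔ', rfl⟩
      have hspanZ : span ℤ (Set.range w) = span ℤ (Set.range v) :=
        Submodule.toAddSubgroup_injective (hΔ'.trans hΔ.symm)
      have hspanR := spanR_eq_of_spanZ_eq hspanZ
      have hsr : s = r := by
        have h1 := finrank_span_eq_card hv
        have h2 := finrank_span_eq_card hw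
        rw [hspanR, h1] at h2
        simpa using h2.symm
      subst hsr
      obtain ⟨B, hB⟩ := exists_coeff (v := v) (w := w)
        (fun j => hspanZ ▸ Submodule.subset_span (Set.mem_range_self j))
      obtain ⟨C, hC⟩ := exists_coeff (v := w) (w := v)
        (fun i => hspanZ ▸ Submodule.subset_span (Set.mem_range_self i))
      have hcomp : ∀ j, w j = ∑ k, ((B.map (Int.cast : ℤ → ℝ)) * (C.map (Int.cast : ℤ → ℝ))) j k • w k := by
        intro j
        rw [hB j]
        calc ∑ i, (B j i : ℝ) • v i
            = ∑ i, (B j i : ℝ) • (∑ k, (C i k : ℝ) • w k) := by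
              exact Finset.sum_congr rfl fun i _ => by rw [hC i]
          _ = ∑ k, (∑ i, (B j i : ℝ) * (C i k : ℝ)) • w k :=
              sum_smul_sum (fun i => (B j i : ℝ)) (C.map (Int.cast : ℤ → ℝ)) w
          _ = ∑ k, ((B.map (Int.cast : ℤ → ℝ)) * (C.map (Int.cast : ℤ → ℝ))) j k • w k := by
              apply Finset.sum_congr rfl
              intro k _
              simp [Matrix.mul_apply]
      have hBC : (B.map (Int.cast : ℤ → ℝ)) * (C.map (Int.cast : ℤ → ℝ)) = 1 :=
        coeff_eq_one hw _ hcomp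
      have hdetBC : (B.det : ℝ) * (C.det : ℝ) = 1 := by
        have := congrArg Matrix.det hBC
        rwa [Matrix.det_mul, Matrix.det_one, det_map_int, det_map_int] at this
      have hdet1 : B.det = 1 ∨ B.det = -1 :=
        Int.isUnit_iff.mp (IsUnit.of_mul_eq_one _ (by exact_mod_cast hdetBC))
      have hsq : ((B.det : ℝ)) ^ 2 = 1 := by
        rcases hdet1 with h | h <;> rw [h] <;> norm_num
      have hdeq : (gram w).det = (gram v).det := by
        rw [gram_transform v w B hB, Matrix.det_mul, Matrix.det_mul, Matrix.det_transpose,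
          det_map_int]
        have h9 : (B.det : ℝ) * (gram v).det * (B.det : ℝ) = ((B.det : ℝ) ^ 2) * (gram v).det := by
          ring
        rw [h9, hsq, one_mul]
      show Real.sqrt (gram w).det = Real.sqrt (gram v).det
      rw [hdeq]
  unfold covol
  rw [hset, csInf_singleton]

lemma covol_nonneg {N : ℕ} (Δ : AddSubgroup (EuclideanSpace ℝ (Fin N))) : 0 ≤ covol Δ := by
  apply Real.sInf_nonneg
  rintro x ⟨r, v, -, -, rfl⟩
  exact Real.sqrt_nonneg _

lemma det_ne_zero {N r : ℕ} {v : Fin r → EuclideanSpace ℝ (Fin N)}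
    {w : Fin r → EuclideanSpace ℝ (Fin N)} (hw : LinearIndependent ℝ w)
    (B : Matrix (Fin r) (Fin r) ℤ) (h : ∀ j, w j = ∑ i, (B j i : ℝ) • v i) :
    B.det ≠ 0 := by
  intro h0
  obtain ⟨g, hg, hgB⟩ := Matrix.exists_vecMul_eq_zero_iff.mpr h0
  have hzero : ∑ j, (g j : ℝ) • w j = 0 := by
    have : ∑ j, (g j : ℝ) • w j = ∑ i, (∑ j, (g j : ℝ) * (B j i : ℝ)) • v i := by
      have h10 := sum_smul_sum (fun j => (g j : ℝ)) (B.map (Int.cast : ℤ → ℝ)) v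
      simp only [Matrix.map_apply] at h10
      rw [← h10]
      exact Finset.sum_congr rfl fun j _ => by rw [h j]
    rw [this]
    apply Finset.sum_eq_zero
    intro i _
    have h1 : (∑ j, (g j : ℝ) * (B j i : ℝ)) = ((g ᵥ* B) i : ℝ) := by
      simp [Matrix.vecMul, dotProduct]
    rw [h1, hgB]
    simp
  have := Fintype.linearIndependent_iff.mp hw _ hzero
  apply hg
  funext j
  exact_mod_cast this j

lemma sqrt_det_le {N r : ℕ} {v : Fin r → EuclideanSpace ℝ (Fin N)}
    {v' : Fin r → EuclideanSpace ℝ (Fin N)} (hv' : LinearIndependent ℝ v')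
    (B : Matrix (Fin r) (Fin r) ℤ) (h : ∀ j, v' j = ∑ i, (B j i : ℝ) • v i) :
    Real.sqrt (gram v).det ≤ Real.sqrt (gram v').det := by
  have hB := det_ne_zero hv' B h
  have hsq : (1 : ℝ) ≤ ((B.det : ℝ)) ^ 2 := by
    have h1 : 1 ≤ B.det ^ 2 := by
      have ha := Int.one_le_abs hB
      calc (1 : ℤ) = 1 * 1 := by ring
        _ ≤ |B.det| * |B.det| := mul_le_mul ha ha (by norm_num) (by positivity)
        _ = B.det ^ 2 := by rw [abs_mul_abs_self]; ring
    exact_mod_cast h1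
  have hdet : (gram v').det = ((B.det : ℝ)) ^ 2 * (gram v).det := by
    rw [gram_transform v v' B h, Matrix.det_mul, Matrix.det_mul, Matrix.det_transpose,
      det_map_int]
    ring
  rcases le_or_gt (gram v).det 0 with h0 | h0
  · calc Real.sqrt (gram v).det = 0 := Real.sqrt_eq_zero_of_nonpos h0
      _ ≤ _ := Real.sqrt_nonneg _
  · apply Real.sqrt_le_sqrt
    rw [hdet]
    nlinarith [hsq, h0]

lemma exists_zbasis {N : ℕ} {Λ : AddSubgroup (EuclideanSpace ℝ (Fin N))}
    {b : Fin N → EuclideanSpace ℝ (Fin N)} (hb : LinearIndependent ℝ b)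
    (hbΛ : (span ℤ (Set.range b)).toAddSubgroup = Λ)
    {Δ : AddSubgroup (EuclideanSpace ℝ (Fin N))} (hΔ : Δ ≤ Λ) :
    ∃ (r : ℕ) (v : Fin r → EuclideanSpace ℝ (Fin N)),
      LinearIndependent ℝ v ∧ (span ℤ (Set.range v)).toAddSubgroup = Δ := by
  have hinj : Function.Injective fun r : ℤ => r • (1 : ℝ) := by
    intro x y hxy
    simpa using hxy
  have hbz : LinearIndependent ℤ b := hb.restrict_scalars hinj
  have hΛ' : AddSubgroup.toIntSubmodule Λ = span ℤ (Set.range b) := by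
    rw [← hbΛ, Submodule.toAddSubgroup_toIntSubmodule]
  have hle : AddSubgroup.toIntSubmodule Δ ≤ span ℤ (Set.range b) := by
    rw [← hΛ']
    exact fun x hx => hΔ hx
  obtain ⟨r, bas⟩ := Submodule.basisOfPidOfLESpan hbz hle
  set v : Fin r → EuclideanSpace ℝ (Fin N) := fun i => ((bas i : EuclideanSpace ℝ (Fin N))) with hv
  have hvz : LinearIndependent ℤ v :=
    bas.linearIndependent.map' (AddSubgroup.toIntSubmodule Δ).subtype (Submodule.ker_subtype _)
  have hspan : span ℤ (Set.range v) = AddSubgroup.toIntSubmodule Δ := by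
    have hrange : Set.range v = (AddSubgroup.toIntSubmodule Δ).subtype '' (Set.range bas) := by
      rw [← Set.range_comp]
      rfl
    rw [hrange, Submodule.span_image, bas.span_eq, Submodule.map_subtype_top]
  have hΔeq : (span ℤ (Set.range v)).toAddSubgroup = Δ := by
    rw [hspan, AddSubgroup.toIntSubmodule_toAddSubgroup]
  -- now upgrade ℤ-independence to ℝ-independence
  have hmemb : ∀ j, v j ∈ span ℤ (Set.range b) := fun j => hle (bas j).2
  obtain ⟨A, hA⟩ := exists_coeff hmemb
  -- the integer Gram-type matrix A * Aᵀ has nonzero determinant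
  have hdet : (A * Aᵀ).det ≠ 0 := by
    intro h0
    obtain ⟨g, hg, hgM⟩ := Matrix.exists_vecMul_eq_zero_iff.mpr h0
    have ht : g ᵥ* A = 0 := by
      have hdp : (g ᵥ* A) ⬝ᵥ (g ᵥ* A) = 0 := by
        calc (g ᵥ* A) ⬝ᵥ (g ᵥ* A) = (g ᵥ* A) ⬝ᵥ (Aᵀ *ᵥ g) := by
              rw [Matrix.mulVec_transpose]
          _ = ((g ᵥ* A) ᵥ* Aᵀ) ⬝ᵥ g := by rw [Matrix.dotProduct_mulVec]
          _ = (g ᵥ* (A * Aᵀ)) ⬝ᵥ g := by rw [Matrix.vecMul_vecMul]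
          _ = 0 := by rw [hgM]; simp
      exact dotProduct_self_eq_zero.mp hdp
    apply hg
    have hzero : ∑ j, g j • v j = 0 := by
      have h2 : ∑ j, (g j : ℝ) • v j = ∑ i, (∑ j, (g j : ℝ) * (A j i : ℝ)) • b i := by
        have h10 := sum_smul_sum (fun j => (g j : ℝ)) (A.map (Int.cast : ℤ → ℝ)) b
        simp only [Matrix.map_apply] at h10
        rw [← h10]
        exact Finset.sum_congr rfl fun j _ => by rw [hA j]
      have h3 : ∑ j, (g j : ℝ) • v j = 0 := by
        rw [h2]
        apply Finset.sum_eq_zero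
        intro i _
        have h4 : (∑ j, (g j : ℝ) * (A j i : ℝ)) = ((g ᵥ* A) i : ℝ) := by
          simp [Matrix.vecMul, dotProduct]
        rw [h4, ht]
        simp
      rw [← h3]
      exact Finset.sum_congr rfl fun j _ => (Int.cast_smul_eq_zsmul ℝ _ _).symm
    have := Fintype.linearIndependent_iff.mp hvz _ hzero
    funext j
    exact this j
  refine ⟨r, v, ?_, hΔeq⟩
  rw [Fintype.linearIndependent_iff]
  intro g hgsum
  have h2 : ∑ i, (∑ j, g j * (A j i : ℝ)) • b i = 0 := by
    have h10 := sum_smul_sum g (A.map (Int.cast : ℤ → ℝ)) b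
    simp only [Matrix.map_apply] at h10
    rw [← h10, ← hgsum]
    exact Finset.sum_congr rfl fun j _ => by rw [hA j]
  have h3 : ∀ i, ∑ j, g j * (A j i : ℝ) = 0 := Fintype.linearIndependent_iff.mp hb _ h2
  have h4 : g ᵥ* ((A * Aᵀ).map (Int.cast : ℤ → ℝ)) = 0 := by
    have h5 : g ᵥ* (A.map (Int.cast : ℤ → ℝ)) = 0 := by
      funext i
      simpa [Matrix.vecMul, dotProduct] using h3 i
    have h6 : (A * Aᵀ).map (Int.cast : ℤ → ℝ)
        = A.map (Int.cast : ℤ → ℝ) * (A.map (Int.cast : ℤ → ℝ))ᵀ := by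
      ext i j
      simp only [Matrix.map_apply, Matrix.mul_apply, Matrix.transpose_apply]
      push_cast
      rfl
    rw [h6, ← Matrix.vecMul_vecMul, h5]
    simp
  have hdet' : IsUnit ((A * Aᵀ).map (Int.cast : ℤ → ℝ)).det := by
    rw [det_map_int]
    simpa using hdet
  have h7 : g = 0 := by
    have h8 := congrArg (fun t => t ᵥ* ((A * Aᵀ).map (Int.cast : ℤ → ℝ))⁻¹) h4
    simpa [Matrix.vecMul_vecMul, Matrix.mul_nonsing_inv _ hdet'] using h8
  exact fun i => congrFun h7 i

lemma covol_anti {N : ℕ} {Λ : AddSubgroup (EuclideanSpace ℝ (Fin N))}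
    {b : Fin N → EuclideanSpace ℝ (Fin N)} (hb : LinearIndependent ℝ b)
    (hbΛ : (span ℤ (Set.range b)).toAddSubgroup = Λ)
    {Δ' Δ : AddSubgroup (EuclideanSpace ℝ (Fin N))}
    (h1 : Δ' ≤ Δ) (h2 : Δ ≤ Λ)
    (hspan : span ℝ (Δ' : Set (EuclideanSpace ℝ (Fin N)))
      = span ℝ (Δ : Set (EuclideanSpace ℝ (Fin N)))) :
    covol Δ ≤ covol Δ' := by
  obtain ⟨r, v, hv, hΔv⟩ := exists_zbasis hb hbΛ h2
  obtain ⟨s, w, hw, hΔw⟩ := exists_zbasis hb hbΛ (h1.trans h2)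
  have hsv : span ℝ (Set.range v) = span ℝ (Δ : Set (EuclideanSpace ℝ (Fin N))) := by
    rw [← hΔv, span_span_coe]
  have hsw : span ℝ (Set.range w) = span ℝ (Δ' : Set (EuclideanSpace ℝ (Fin N))) := by
    rw [← hΔw, span_span_coe]
  have hsr : s = r := by
    have e1 := finrank_span_eq_card hv
    have e2 := finrank_span_eq_card hw
    rw [hsv] at e1
    rw [hsw, hspan, e1] at e2
    simpa using e2.symm
  subst hsr
  have hsub : ∀ j, w j ∈ span ℤ (Set.range v) := by
    intro j
    have hmem : w j ∈ Δ' := by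
      rw [← hΔw]
      exact Submodule.subset_span (Set.mem_range_self j)
    have : w j ∈ Δ := h1 hmem
    rw [← hΔv] at this
    exact this
  obtain ⟨B, hB⟩ := exists_coeff hsub
  rw [covol_eq hv hΔv, covol_eq hw hΔw]
  exact sqrt_det_le hw B hB

end Stmt4Aux

open Stmt4Aux Submodule

/-- Lemma 2.4 of the paper: if some nonzero `(M,Λ)`-eligible subspace has small covolume, then
there is a proper nonzero `(M,Λ)`-eligible subspace `W∞` which is "protected": for every
eligible `W` not contained in `W∞`, the covolume of `(Λ ∩ W) + (Λ ∩ W∞)` is at least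
`c` times that of `Λ ∩ W∞`. -/
theorem stmt4 {N : ℕ} (hN : 1 ≤ N) (c : ℝ) (hc : 1 < c)
    (Λ : AddSubgroup (EuclideanSpace ℝ (Fin N)))
    (hfull : ∃ v : Fin N → EuclideanSpace ℝ (Fin N),
      LinearIndependent ℝ v ∧ (Submodule.span ℤ (Set.range v)).toAddSubgroup = Λ)
    (hcovol : covol Λ = 1)
    (M : Set (EuclideanSpace ℝ (Fin N) →ₗ[ℝ] EuclideanSpace ℝ (Fin N)))
    (W₁ : Submodule ℝ (EuclideanSpace ℝ (Fin N)))
    (hW₁ : W₁ ≠ ⊥) (hW₁e : IsEligible M Λ W₁)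
    (hW₁small : covol (Λ ⊓ W₁.toAddSubgroup) < (c ^ N)⁻¹) :
    ∃ Winf : Submodule ℝ (EuclideanSpace ℝ (Fin N)),
      Winf ≠ ⊥ ∧ Winf ≠ ⊤ ∧ IsEligible M Λ Winf ∧
      ∀ W : Submodule ℝ (EuclideanSpace ℝ (Fin N)), IsEligible M Λ W → ¬ W ≤ Winf →
        covol ((Λ ⊓ W.toAddSubgroup) ⊔ (Λ ⊓ Winf.toAddSubgroup)) ≥
          c * covol (Λ ⊓ Winf.toAddSubgroup) := by
  classical
  obtain ⟨b, hb, hbΛ⟩ := hfull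
  have hc0 : (0 : ℝ) < c := lt_trans one_pos hc
  have hcp : ∀ n : ℕ, (0 : ℝ) < c ^ n := fun n => pow_pos hc0 n
  set F : Submodule ℝ (EuclideanSpace ℝ (Fin N)) → ℝ :=
    fun W => covol (Λ ⊓ W.toAddSubgroup) / c ^ (Module.finrank ℝ W) with hF
  have hEfin : Module.finrank ℝ (EuclideanSpace ℝ (Fin N)) = N := by
    simp [finrank_euclideanSpace]
  have hrankle : ∀ W : Submodule ℝ (EuclideanSpace ℝ (Fin N)), Module.finrank ℝ W ≤ N := by
    intro W
    have h := Submodule.finrank_le W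
    rwa [hEfin] at h
  -- the ℝ-span of `Λ ⊓ W` is `W` for rational `W`
  have spanInf : ∀ W : Submodule ℝ (EuclideanSpace ℝ (Fin N)), IsRational Λ W →
      span ℝ ((Λ ⊓ W.toAddSubgroup : AddSubgroup (EuclideanSpace ℝ (Fin N))) :
        Set (EuclideanSpace ℝ (Fin N))) = W := by
    intro W hW
    rw [AddSubgroup.coe_inf, Submodule.coe_toAddSubgroup, Set.inter_comm]
    exact hW.symm
  -- descent: find an eligible superspace minimizing F among its strict eligible superspaces
  have descent : ∀ k : ℕ, ∀ W : Submodule ℝ (EuclideanSpace ℝ (Fin N)),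
      IsEligible M Λ W → W ≠ ⊥ → N - Module.finrank ℝ W ≤ k →
      ∃ V, W ≤ V ∧ IsEligible M Λ V ∧ V ≠ ⊥ ∧ F V ≤ F W ∧
        ∀ W', IsEligible M Λ W' → V < W' → F V ≤ F W' := by
    intro k
    induction k with
    | zero =>
      intro W hWe hWb hk
      refine ⟨W, le_rfl, hWe, hWb, le_rfl, fun W' hW'e hlt => absurd hlt ?_⟩
      have hWtop : W = ⊤ := by
        apply Submodule.eq_top_of_finrank_eq
        have h2 := hrankle W
        rw [hEfin]
        omega
      rw [hWtop]
      exact not_top_lt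
    | succ k ih =>
      intro W hWe hWb hk
      by_cases h : ∃ W', IsEligible M Λ W' ∧ W < W' ∧ F W' < F W
      · obtain ⟨W', hW'e, hlt, hFlt⟩ := h
        have hrank : Module.finrank ℝ W < Module.finrank ℝ W' :=
          Submodule.finrank_lt_finrank_of_lt hlt
        obtain ⟨V, hWV, hVe, hVb, hFV, hVmin⟩ := ih W' hW'e (ne_bot_of_gt hlt)
          (by have := hrankle W'; omega)
        exact ⟨V, hlt.le.trans hWV, hVe, hVb, hFV.trans hFlt.le, hVmin⟩
      · push_neg at h
        exact ⟨W, le_rfl, hWe, hWb, le_rfl, fun W' h1 h2 => h W' h1 h2⟩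
  obtain ⟨Winf, hWV, hVe, hVb, hFV, hVmin⟩ :=
    descent N W₁ hW₁e hW₁ (Nat.sub_le _ _)
  -- F W₁ is small
  have hd₁ : 1 ≤ Module.finrank ℝ W₁ := by
    by_contra hcon
    push_neg at hcon
    exact hW₁ ((Submodule.finrank_eq_zero).mp (by omega))
  have hFW₁ : F W₁ < (c ^ N)⁻¹ := by
    have h1 : (1 : ℝ) ≤ c ^ (Module.finrank ℝ W₁) := one_le_pow₀ hc.le
    calc F W₁ ≤ covol (Λ ⊓ W₁.toAddSubgroup) := div_le_self (covol_nonneg _) h1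
      _ < (c ^ N)⁻¹ := hW₁small
  have hVtop : Winf ≠ ⊤ := by
    intro htop
    have hFtop : F (⊤ : Submodule ℝ (EuclideanSpace ℝ (Fin N))) = (c ^ N)⁻¹ := by
      show covol (Λ ⊓ (⊤ : Submodule ℝ (EuclideanSpace ℝ (Fin N))).toAddSubgroup)
          / c ^ (Module.finrank ℝ (⊤ : Submodule ℝ (EuclideanSpace ℝ (Fin N)))) = (c ^ N)⁻¹
      rw [Submodule.top_toAddSubgroup, inf_top_eq, hcovol, finrank_top, hEfin, one_div]
    rw [htop, hFtop] at hFV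
    exact absurd (hFV.trans_lt hFW₁) (lt_irrefl _)
  refine ⟨Winf, hVb, hVtop, hVe, ?_⟩
  intro W hWe hnle
  set W' : Submodule ℝ (EuclideanSpace ℝ (Fin N)) := W ⊔ Winf with hW'
  have hW'e : IsEligible M Λ W' := by
    constructor
    · apply le_antisymm
      · apply sup_le
        · rw [hWe.1]
          apply Submodule.span_mono
          exact Set.inter_subset_inter_left _ (SetLike.coe_subset_coe.mpr le_sup_left)
        · rw [hVe.1]
          apply Submodule.span_mono
          exact Set.inter_subset_inter_left _ (SetLike.coe_subset_coe.mpr le_sup_right)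
      · rw [Submodule.span_le]
        exact Set.inter_subset_left
    · intro m hm
      rw [Submodule.map_sup]
      exact sup_le ((hWe.2 m hm).trans le_sup_left) ((hVe.2 m hm).trans le_sup_right)
  have hlt : Winf < W' := by
    apply lt_of_le_of_ne le_sup_right
    intro heq
    exact hnle (heq ▸ le_sup_left)
  have hFle : F Winf ≤ F W' := hVmin W' hW'e hlt
  have hrank : Module.finrank ℝ Winf < Module.finrank ℝ W' :=
    Submodule.finrank_lt_finrank_of_lt hlt
  -- step 1 : c * covol (Λ ⊓ Winf) ≤ covol (Λ ⊓ W')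
  have step1 : c * covol (Λ ⊓ Winf.toAddSubgroup) ≤ covol (Λ ⊓ W'.toAddSubgroup) := by
    have h1 : covol (Λ ⊓ Winf.toAddSubgroup) * c ^ (Module.finrank ℝ W')
        ≤ covol (Λ ⊓ W'.toAddSubgroup) * c ^ (Module.finrank ℝ Winf) :=
      (div_le_div_iff₀ (hcp _) (hcp _)).mp hFle
    have h2 : c * covol (Λ ⊓ Winf.toAddSubgroup) * c ^ (Module.finrank ℝ Winf)
        ≤ covol (Λ ⊓ Winf.toAddSubgroup) * c ^ (Module.finrank ℝ W') := by
      have h3 : c ^ (Module.finrank ℝ Winf + 1) ≤ c ^ (Module.finrank ℝ W') :=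
        pow_le_pow_right₀ hc.le hrank
      calc c * covol (Λ ⊓ Winf.toAddSubgroup) * c ^ (Module.finrank ℝ Winf)
          = covol (Λ ⊓ Winf.toAddSubgroup) * c ^ (Module.finrank ℝ Winf + 1) := by ring
        _ ≤ covol (Λ ⊓ Winf.toAddSubgroup) * c ^ (Module.finrank ℝ W') :=
            mul_le_mul_of_nonneg_left h3 (covol_nonneg _)
    have h4 := h2.trans h1
    exact le_of_mul_le_mul_right h4 (hcp _)
  -- step 2 : covol (Λ ⊓ W') ≤ covol of the sup of the two sublattices
  have hsuple : (Λ ⊓ W.toAddSubgroup) ⊔ (Λ ⊓ Winf.toAddSubgroup) ≤ Λ ⊓ W'.toAddSubgroup := by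
    apply sup_le
    · exact inf_le_inf_left Λ (Submodule.toAddSubgroup_mono le_sup_left)
    · exact inf_le_inf_left Λ (Submodule.toAddSubgroup_mono le_sup_right)
  have hspanG : span ℝ (((Λ ⊓ W.toAddSubgroup) ⊔ (Λ ⊓ Winf.toAddSubgroup) :
      AddSubgroup (EuclideanSpace ℝ (Fin N))) : Set (EuclideanSpace ℝ (Fin N)))
      = span ℝ ((Λ ⊓ W'.toAddSubgroup : AddSubgroup (EuclideanSpace ℝ (Fin N))) :
        Set (EuclideanSpace ℝ (Fin N))) := by
    rw [spanInf W' hW'e.1]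
    apply le_antisymm
    · rw [Submodule.span_le]
      intro x hx
      have hxW : x ∈ Λ ⊓ W'.toAddSubgroup := hsuple hx
      exact (Submodule.mem_toAddSubgroup _).mp (AddSubgroup.mem_inf.mp hxW).2
    · apply sup_le
      · calc W = span ℝ ((Λ ⊓ W.toAddSubgroup : AddSubgroup (EuclideanSpace ℝ (Fin N))) :
              Set (EuclideanSpace ℝ (Fin N))) := (spanInf W hWe.1).symm
          _ ≤ span ℝ (((Λ ⊓ W.toAddSubgroup) ⊔ (Λ ⊓ Winf.toAddSubgroup) :
              AddSubgroup (EuclideanSpace ℝ (Fin N))) : Set (EuclideanSpace ℝ (Fin N))) :=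
            Submodule.span_mono (SetLike.coe_subset_coe.mpr le_sup_left)
      · calc Winf = span ℝ ((Λ ⊓ Winf.toAddSubgroup : AddSubgroup (EuclideanSpace ℝ (Fin N))) :
              Set (EuclideanSpace ℝ (Fin N))) := (spanInf Winf hVe.1).symm
          _ ≤ span ℝ (((Λ ⊓ W.toAddSubgroup) ⊔ (Λ ⊓ Winf.toAddSubgroup) :
              AddSubgroup (EuclideanSpace ℝ (Fin N))) : Set (EuclideanSpace ℝ (Fin N))) :=
            Submodule.span_mono (SetLike.coe_subset_coe.mpr le_sup_right)
  have step2 : covol (Λ ⊓ W'.toAddSubgroup)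
      ≤ covol ((Λ ⊓ W.toAddSubgroup) ⊔ (Λ ⊓ Winf.toAddSubgroup)) :=
    covol_anti hb hbΛ hsuple inf_le_left hspanG
  exact step1.trans step2
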